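/- Let M = M₁ ⊕ M₂ be a direct sum of finite-dimensional right A-modules, δ ∈ ℤ^n, and L a submodule of M with δ(dim L) = f_M(δ). Then δ(dim(L ∩ M₁)) = f_{M₁}(δ) and δ(dim(L ∩ M₂)) = f_{M₂}(δ). -/

import Mathlib

/-!  Common setup: tropical F-polynomials and general presentations
for a finite-dimensional basic algebra `A` over `k`, following Fei,
"Tropical F-polynomials and general presentations".
All modules are *right* `A`-modules, encoded as left `Aᵐᵒᵖ`-modules. -/

namespace TropGP

open Module MulOpposite

section Defs

variable (k : Type) [Field k]
variable (A : Type) [Ring A] [Algebra k A]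

/-- The right regular `A`-module structure on `A` is compatible with the `k`-action. -/
instance instTowerOpA : IsScalarTower k Aᵐᵒᵖ A :=
  ⟨fun c b x => by
    rw [MulOpposite.smul_eq_mul_unop, MulOpposite.smul_eq_mul_unop, MulOpposite.unop_smul,
      Algebra.mul_smul_comm]⟩

/-- Shortcut instance: scalars of `k` commute with the right `A`-action. -/
instance (priority := 5000) instSMulCommOpK (M : Type) [AddCommGroup M] [Module k M]
    [Module Aᵐᵒᵖ M] [IsScalarTower k Aᵐᵒᵖ M] : SMulCommClass Aᵐᵒᵖ k M :=
  IsScalarTower.to_smulCommClass'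

variable {n : ℕ} (e : Fin n → A)

/-- Pairing of a weight vector with an integral (dimension) vector. -/
def pz (δ β : Fin n → ℤ) : ℤ := ∑ i, δ i * β i

/-- Pairing of an integral weight vector with a real vector. -/
def przr (δ : Fin n → ℤ) (γ : Fin n → ℝ) : ℝ := ∑ i, (δ i : ℝ) * γ i

/-- Pairing of two real vectors. -/
def prr (δ γ : Fin n → ℝ) : ℝ := ∑ i, δ i * γ i

variable (M : Type) [AddCommGroup M] [Module k M] [Module Aᵐᵒᵖ M] [IsScalarTower k Aᵐᵒᵖ M]

/-- Right multiplication by `e i`, as a `k`-linear endomorphism of a right `A`-module. -/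
noncomputable def rmul (i : Fin n) : M →ₗ[k] M where
  toFun x := op (e i) • x
  map_add' x y := smul_add _ x y
  map_smul' c x := smul_comm _ c x

/-- The dimension vector: `i ↦ dim_k (M eᵢ)`. -/
noncomputable def dimVec : Fin n → ℤ :=
  fun i => (finrank k (LinearMap.range (rmul k A e M i)) : ℤ)

/-- The real dimension vector. -/
noncomputable def dimVecR : Fin n → ℝ :=
  fun i => (finrank k (LinearMap.range (rmul k A e M i)) : ℝ)

/-- The tropical F-polynomial: `f_M(δ) = max { δ(dim L) : L ⊆ M }`. -/
noncomputable def tropF (δ : Fin n → ℤ) : ℤ :=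
  sSup (Set.range fun L : Submodule Aᵐᵒᵖ M => pz δ (dimVec k A e L))

/-- The dual tropical F-polynomial: `f̌_M(δ) = max { δ(dim N) : M ↠ N }`. -/
noncomputable def tropCheck (δ : Fin n → ℤ) : ℤ :=
  sSup (Set.range fun L : Submodule Aᵐᵒᵖ M => pz δ (dimVec k A e (M ⧸ L)))

/-- The Newton polytope of `M`: the convex hull of dimension vectors of submodules. -/
noncomputable def newton : Set (Fin n → ℝ) :=
  convexHull ℝ {x | ∃ L : Submodule Aᵐᵒᵖ M, x = dimVecR k A e L}

/-- The dual Newton polytope of `M`: convex hull of dimension vectors of quotients. -/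
noncomputable def newtonCheck : Set (Fin n → ℝ) :=
  convexHull ℝ {x | ∃ L : Submodule Aᵐᵒᵖ M, x = dimVecR k A e (M ⧸ L)}

/-- King's `δ`-semistability. -/
def IsSemistable (δ : Fin n → ℤ) : Prop :=
  pz δ (dimVec k A e M) = 0 ∧ ∀ L : Submodule Aᵐᵒᵖ M, pz δ (dimVec k A e L) ≤ 0

/-- `δ`-semistability for a real weight. -/
def IsSemistableR (δ : Fin n → ℝ) : Prop :=
  prr δ (dimVecR k A e M) = 0 ∧ ∀ L : Submodule Aᵐᵒᵖ M, prr δ (dimVecR k A e L) ≤ 0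

/-- `δ`-stability. -/
def IsStable (δ : Fin n → ℤ) : Prop :=
  pz δ (dimVec k A e M) = 0 ∧
    ∀ L : Submodule Aᵐᵒᵖ M, L ≠ ⊥ → L ≠ ⊤ → pz δ (dimVec k A e L) < 0

section HomE

variable {P Q : Type} [AddCommGroup P] [Module Aᵐᵒᵖ P] [AddCommGroup Q] [Module Aᵐᵒᵖ Q]

/-- The `k`-linear map `Hom_A(Q, M) → Hom_A(P, M)` induced by `d : P → Q`. -/
noncomputable def homMap (d : P →ₗ[Aᵐᵒᵖ] Q) : (Q →ₗ[Aᵐᵒᵖ] M) →ₗ[k] (P →ₗ[Aᵐᵒᵖ] M) where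
  toFun f := f ∘ₗ d
  map_add' f g := LinearMap.add_comp _ _ _
  map_smul' c f := LinearMap.smul_comp _ _ _

/-- `dim_k Hom(d, M)`: the kernel of the induced map. -/
noncomputable def homNum (d : P →ₗ[Aᵐᵒᵖ] Q) : ℕ :=
  finrank k (LinearMap.ker (homMap k A M d))

/-- `dim_k E(d, M)`: the cokernel of the induced map. -/
noncomputable def eNum (d : P →ₗ[Aᵐᵒᵖ] Q) : ℕ :=
  finrank k ((P →ₗ[Aᵐᵒᵖ] M) ⧸ LinearMap.range (homMap k A M d))

end HomE

/-- The indecomposable projective right module `e i · A`. -/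
abbrev projP (i : Fin n) : Submodule Aᵐᵒᵖ A := Submodule.span Aᵐᵒᵖ {e i}

/-- The projective right module `P(β) = ⊕ᵢ (eᵢA)^{β i}`. -/
abbrev PP (β : Fin n → ℕ) : Type := Π i : Fin n, Fin (β i) → projP A e i

/-- The weight condition `β₊ - β₋ = δ`. -/
def HasWt (βm βp : Fin n → ℕ) (δ : Fin n → ℤ) : Prop :=
  ∀ i, (βp i : ℤ) - (βm i : ℤ) = δ i

/-- The cokernel of a projective presentation. -/
abbrev Coker {βm βp : Fin n → ℕ} (d : PP A e βm →ₗ[Aᵐᵒᵖ] PP A e βp) : Type :=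
  PP A e βp ⧸ LinearMap.range d

/-- `hom(δ, M)`: min of `dim_k Hom(d,M)` over projective presentations `d` of weight `δ`. -/
noncomputable def homWt (δ : Fin n → ℤ) : ℕ :=
  sInf {m : ℕ | ∃ (βm βp : Fin n → ℕ) (d : PP A e βm →ₗ[Aᵐᵒᵖ] PP A e βp),
    HasWt βm βp δ ∧ m = homNum k A M d}

/-- `e(δ, M)`: min of `dim_k E(d,M)` over projective presentations `d` of weight `δ`. -/
noncomputable def eWt (δ : Fin n → ℤ) : ℕ :=
  sInf {m : ℕ | ∃ (βm βp : Fin n → ℕ) (d : PP A e βm →ₗ[Aᵐᵒᵖ] PP A e βp),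
    HasWt βm βp δ ∧ m = eNum k A M d}

/-- The indecomposable left module `A · e i`. -/
abbrev projL (i : Fin n) : Submodule A A := Submodule.span A {e i}

section DualMod

variable (V : Type) [AddCommGroup V] [Module k V] [Module A V] [IsScalarTower k A V]

/-- Left multiplication by `a` as a `k`-linear endomorphism of a left module. -/
noncomputable def lact (a : A) : V →ₗ[k] V where
  toFun x := a • x
  map_add' x y := smul_add a x y
  map_smul' c x := smul_comm a c x

/-- The right `A`-action on the `k`-dual of a left `A`-module. -/
noncomputable instance dualSMul : SMul Aᵐᵒᵖ (V →ₗ[k] k) :=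
  ⟨fun a f => f ∘ₗ lact k A V a.unop⟩

@[simp] lemma dual_smul_apply (a : Aᵐᵒᵖ) (f : V →ₗ[k] k) (x : V) :
    (a • f) x = f (a.unop • x) := rfl

/-- The `k`-dual of a left `A`-module is a right `A`-module. -/
noncomputable instance dualModule : Module Aᵐᵒᵖ (V →ₗ[k] k) :=
  { dualSMul k A V with
    one_smul := fun f => by ext x; simp
    mul_smul := fun a b f => by ext x; simp [mul_smul]
    smul_zero := fun a => by ext x; simp
    smul_add := fun a f g => by ext x; simp
    add_smul := fun a b f => by ext x; simp [add_smul]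
    zero_smul := fun f => by ext x; simp }

instance dualSMulComm : SMulCommClass Aᵐᵒᵖ k (V →ₗ[k] k) :=
  ⟨fun a c f => by ext x; simp⟩

instance dualTower : IsScalarTower k Aᵐᵒᵖ (V →ₗ[k] k) :=
  ⟨fun c a f => by ext x; simp [MulOpposite.unop_smul, smul_assoc]⟩

end DualMod

/-- The indecomposable injective right module `Iᵢ = D(A eᵢ)`,
the `k`-dual of the left module `A eᵢ`. -/
abbrev IP (i : Fin n) : Type := (projL A e i) →ₗ[k] k

/-- The injective right module `I(β) = ⊕ᵢ Iᵢ^{β i}`. -/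
abbrev IM (β : Fin n → ℕ) : Type := Π i : Fin n, Fin (β i) → IP k A e i

section PostMap

variable {I J : Type} [AddCommGroup I] [Module k I] [Module Aᵐᵒᵖ I] [IsScalarTower k Aᵐᵒᵖ I]
variable [AddCommGroup J] [Module k J] [Module Aᵐᵒᵖ J] [IsScalarTower k Aᵐᵒᵖ J]

/-- The `k`-linear map `Hom_A(M, I) → Hom_A(M, J)` induced by `dc : I → J`. -/
noncomputable def postMap (dc : I →ₗ[Aᵐᵒᵖ] J) :
    (M →ₗ[Aᵐᵒᵖ] I) →ₗ[k] (M →ₗ[Aᵐᵒᵖ] J) where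
  toFun f := dc ∘ₗ f
  map_add' f g := LinearMap.comp_add _ _ _
  map_smul' c f := by
    ext x
    simp only [LinearMap.comp_apply, LinearMap.smul_apply, RingHom.id_apply]
    rw [← algebraMap_smul Aᵐᵒᵖ c (f x), LinearMap.map_smul, algebraMap_smul]

end PostMap

/-- `hom(M, δ̌)`: min of `dim_k Hom(M, ď)` over injective presentations `ď` of weight `δ̌`. -/
noncomputable def ihomWt (δc : Fin n → ℤ) : ℕ :=
  sInf {m : ℕ | ∃ (βp βm : Fin n → ℕ) (dc : IM k A e βp →ₗ[Aᵐᵒᵖ] IM k A e βm),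
    HasWt βm βp δc ∧ m = finrank k (LinearMap.ker (postMap k A M dc))}

/-- `ě(M, δ̌)`: min of `dim_k Ě(M, ď)` over injective presentations `ď` of weight `δ̌`. -/
noncomputable def ieWt (δc : Fin n → ℤ) : ℕ :=
  sInf {m : ℕ | ∃ (βp βm : Fin n → ℕ) (dc : IM k A e βp →ₗ[Aᵐᵒᵖ] IM k A e βm),
    HasWt βm βp δc ∧
      m = Module.finrank k (@HasQuotient.Quotient _ _ Submodule.hasQuotient
        (LinearMap.range (postMap k A M dc)))}

/-- `e(δ, δ) = 0`: there are projective presentations `d, d'` of weight `δ` with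
`E(d, Coker d') = 0`, i.e. the induced map on `Hom`s is surjective. -/
def EWtSelfZero (δ : Fin n → ℤ) : Prop :=
  ∃ (βm βp : Fin n → ℕ) (d : PP A e βm →ₗ[Aᵐᵒᵖ] PP A e βp)
    (βm' βp' : Fin n → ℕ) (d' : PP A e βm' →ₗ[Aᵐᵒᵖ] PP A e βp'),
    HasWt βm βp δ ∧ HasWt βm' βp' δ ∧
      Function.Surjective (homMap k A (Coker A e d') d)

/-- `e₁, …, e_n` is a complete set of primitive orthogonal idempotents and `A` is basic:
the indecomposable projectives `eᵢA` are pairwise non-isomorphic. -/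
def IsBasicSetup : Prop :=
  (∀ i, IsIdempotentElem (e i)) ∧
  (∀ i j, i ≠ j → e i * e j = 0) ∧
  (∑ i, e i = 1) ∧
  (∀ i, e i ≠ 0 ∧ ∀ f g : A, IsIdempotentElem f → IsIdempotentElem g →
      f * g = 0 → g * f = 0 → f + g = e i → f = 0 ∨ g = 0) ∧
  (∀ i j, i ≠ j → IsEmpty (projP A e i ≃ₗ[Aᵐᵒᵖ] projP A e j))

end Defs

section Aux

open Module MulOpposite

variable (k : Type) [Field k]
variable (A : Type) [Ring A] [Algebra k A]
variable {n : ℕ} (e : Fin n → A)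

/-- The obvious equivalence `(P.prod Q) ≃ P × Q` for submodules. -/
def prodSubEquiv {R M₁ M₂ : Type*} [Ring R] [AddCommGroup M₁] [AddCommGroup M₂]
    [Module R M₁] [Module R M₂] (P : Submodule R M₁) (Q : Submodule R M₂) :
    (P.prod Q) ≃ₗ[R] P × Q where
  toFun x := (⟨x.1.1, x.2.1⟩, ⟨x.1.2, x.2.2⟩)
  invFun y := ⟨(y.1.1, y.2.1), ⟨y.1.2, y.2.2⟩⟩
  left_inv x := rfl
  right_inv y := rfl
  map_add' x y := rfl
  map_smul' c x := rfl

variable (M N : Type) [AddCommGroup M] [Module k M] [Module Aᵐᵒᵖ M] [IsScalarTower k Aᵐᵒᵖ M]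
  [AddCommGroup N] [Module k N] [Module Aᵐᵒᵖ N] [IsScalarTower k Aᵐᵒᵖ N]

theorem fdSub [FiniteDimensional k M] (p : Submodule Aᵐᵒᵖ M) : FiniteDimensional k p := by
  have eqv : (p.restrictScalars k) ≃ₗ[Aᵐᵒᵖ] p := Submodule.restrictScalarsEquiv k Aᵐᵒᵖ M p
  exact Module.Finite.equiv (eqv.restrictScalars k)

theorem finrank_sub_le [FiniteDimensional k M] (p : Submodule Aᵐᵒᵖ M) :
    finrank k p ≤ finrank k M := by
  have eqv : (p.restrictScalars k) ≃ₗ[Aᵐᵒᵖ] p := Submodule.restrictScalarsEquiv k Aᵐᵒᵖ M p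
  rw [← (eqv.restrictScalars k).finrank_eq]
  exact Submodule.finrank_le _

@[simp] theorem rmul_apply (i : Fin n) (x : M) : rmul k A e M i x = op (e i) • x := rfl

theorem rmul_comm (f : M →ₗ[Aᵐᵒᵖ] N) (i : Fin n) :
    (f.restrictScalars k) ∘ₗ rmul k A e M i = rmul k A e N i ∘ₗ (f.restrictScalars k) := by
  ext x
  simp [map_smul]

/-- `dimVec` is invariant under `Aᵐᵒᵖ`-linear isomorphism. -/
theorem dim_iso (φ : M ≃ₗ[Aᵐᵒᵖ] N) (i : Fin n) :
    dimVec k A e M i = dimVec k A e N i := by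
  unfold dimVec
  congr 1
  set φk : M ≃ₗ[k] N := φ.restrictScalars k with hφk
  have h1 : (rmul k A e N i) =
      (φk : M →ₗ[k] N) ∘ₗ (rmul k A e M i) ∘ₗ (φk.symm : N →ₗ[k] M) := by
    ext y
    simp only [rmul_apply, LinearMap.comp_apply, LinearEquiv.coe_coe, hφk,
      LinearEquiv.restrictScalars_apply, LinearEquiv.restrictScalars_symm_apply]
    rw [map_smul, φ.apply_symm_apply]
  rw [h1, LinearMap.range_comp, LinearMap.range_comp_of_range_eq_top _ φk.symm.range,
    LinearEquiv.finrank_map_eq]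

/-- The dimension of `S eᵢ` computed inside the ambient module. -/
theorem dim_sub (S : Submodule Aᵐᵒᵖ M) (i : Fin n) :
    finrank k (LinearMap.range (rmul k A e S i)) =
      finrank k (Submodule.map (rmul k A e M i) (S.restrictScalars k)) := by
  set ι : S →ₗ[k] M := (S.subtype).restrictScalars k with hι
  have hinj : Function.Injective ι := Subtype.coe_injective
  have hcomm : ι ∘ₗ rmul k A e S i = (rmul k A e M i) ∘ₗ ι := rfl
  have hrι : LinearMap.range ι = S.restrictScalars k := by
    ext x
    simp only [LinearMap.mem_range, Submodule.restrictScalars_mem, hι,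
      LinearMap.restrictScalars_apply, Submodule.coe_subtype]
    exact ⟨fun ⟨y, hy⟩ => hy ▸ y.2, fun hx => ⟨⟨x, hx⟩, rfl⟩⟩
  have h2 : Submodule.map ι (LinearMap.range (rmul k A e S i)) =
      Submodule.map (rmul k A e M i) (S.restrictScalars k) := by
    rw [← LinearMap.range_comp, hcomm, LinearMap.range_comp, hrι]
  rw [← h2]
  exact (Submodule.equivMapOfInjective ι hinj _).finrank_eq

/-- Additivity of `dimVec` along kernels and images. -/
theorem dim_add [FiniteDimensional k M] (f : M →ₗ[Aᵐᵒᵖ] N) (i : Fin n)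
    (hid : IsIdempotentElem (e i)) :
    dimVec k A e M i =
      dimVec k A e (LinearMap.ker f) i + dimVec k A e (LinearMap.range f) i := by
  unfold dimVec
  rw [← Nat.cast_add]
  congr 1
  set f' := f.restrictScalars k with hf'
  set W := LinearMap.range (rmul k A e M i) with hW
  have hrng : LinearMap.range f' = (LinearMap.range f).restrictScalars k := by
    ext x; simp [hf']
  have hker : LinearMap.ker f' = (LinearMap.ker f).restrictScalars k := by
    ext x; simp [hf']
  have hR : LinearMap.range (f'.domRestrict W) =
      Submodule.map (rmul k A e N i) ((LinearMap.range f).restrictScalars k) := by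
    rw [LinearMap.range_domRestrict, hW, ← LinearMap.range_comp, rmul_comm,
      LinearMap.range_comp, hrng]
  have hB : W ⊓ LinearMap.ker f' =
      Submodule.map (rmul k A e M i) ((LinearMap.ker f).restrictScalars k) := by
    apply le_antisymm
    · rintro x hx
      rw [Submodule.mem_inf] at hx
      obtain ⟨hxW, hxK⟩ := hx
      obtain ⟨y, rfl⟩ := hxW
      refine ⟨op (e i) • y, ?_, ?_⟩
      · show op (e i) • y ∈ Submodule.restrictScalars k (LinearMap.ker f)
        have h0 : f' (op (e i) • y) = 0 := hxK
        rw [Submodule.restrictScalars_mem, LinearMap.mem_ker]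
        exact h0
      · show op (e i) • (op (e i) • y) = op (e i) • y
        rw [← mul_smul, ← MulOpposite.op_mul, hid]
    · rintro x ⟨y, hy, rfl⟩
      rw [Submodule.mem_inf]
      constructor
      · exact ⟨y, rfl⟩
      · show f (op (e i) • y) = 0
        have hy0 : f y = 0 := hy
        rw [map_smul, hy0, smul_zero]
  have hK : finrank k (LinearMap.ker (f'.domRestrict W)) =
      finrank k (Submodule.map (rmul k A e M i) ((LinearMap.ker f).restrictScalars k)) := by
    rw [LinearMap.ker_domRestrict, (Submodule.equivMapOfInjective W.subtype
      (Submodule.injective_subtype W) _).finrank_eq, Submodule.map_comap_subtype, hB]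
  have h1 : finrank k (LinearMap.range (f'.domRestrict W)) +
      finrank k (LinearMap.ker (f'.domRestrict W)) = finrank k W :=
    LinearMap.finrank_range_add_finrank_ker _
  rw [hR, hK] at h1
  rw [dim_sub k A e M (LinearMap.ker f) i, dim_sub k A e N (LinearMap.range f) i]
  omega

variable (M₁ M₂ : Type) [AddCommGroup M₁] [Module k M₁] [Module Aᵐᵒᵖ M₁]
  [IsScalarTower k Aᵐᵒᵖ M₁] [AddCommGroup M₂] [Module k M₂] [Module Aᵐᵒᵖ M₂]
  [IsScalarTower k Aᵐᵒᵖ M₂]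

theorem dim_prod [FiniteDimensional k M₁] [FiniteDimensional k M₂] (i : Fin n) :
    dimVec k A e (M₁ × M₂) i = dimVec k A e M₁ i + dimVec k A e M₂ i := by
  unfold dimVec
  rw [← Nat.cast_add]
  congr 1
  have h : rmul k A e (M₁ × M₂) i = (rmul k A e M₁ i).prodMap (rmul k A e M₂ i) := by
    apply LinearMap.ext; intro x; rfl
  have hr : LinearMap.range ((rmul k A e M₁ i).prodMap (rmul k A e M₂ i)) =
      (LinearMap.range (rmul k A e M₁ i)).prod (LinearMap.range (rmul k A e M₂ i)) := by
    ext x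
    simp only [LinearMap.mem_range, Submodule.mem_prod, LinearMap.prodMap_apply]
    constructor
    · rintro ⟨y, rfl⟩; exact ⟨⟨y.1, rfl⟩, ⟨y.2, rfl⟩⟩
    · rintro ⟨⟨a, ha⟩, ⟨b, hb⟩⟩
      exact ⟨(a, b), Prod.ext ha hb⟩
  rw [h, hr, (prodSubEquiv _ _).finrank_eq, Module.finrank_prod]

theorem pz_eq_of_iso (δ : Fin n → ℤ) (φ : M ≃ₗ[Aᵐᵒᵖ] N) :
    pz δ (dimVec k A e M) = pz δ (dimVec k A e N) := by
  unfold pz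
  exact Finset.sum_congr rfl fun i _ => by rw [dim_iso k A e M N φ i]

theorem pz_le_bound [FiniteDimensional k M] (δ : Fin n → ℤ) (L : Submodule Aᵐᵒᵖ M) :
    pz δ (dimVec k A e L) ≤ ∑ i, |δ i| * (finrank k M : ℤ) := by
  unfold pz
  apply Finset.sum_le_sum
  intro i _
  haveI := fdSub k A M L
  have h0 : (0 : ℤ) ≤ dimVec k A e L i := by
    unfold dimVec; exact Int.natCast_nonneg _
  have h1 : dimVec k A e L i ≤ (finrank k M : ℤ) := by
    unfold dimVec
    exact_mod_cast le_trans (Submodule.finrank_le _) (finrank_sub_le k A M L)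
  calc δ i * dimVec k A e L i ≤ |δ i| * dimVec k A e L i :=
        mul_le_mul_of_nonneg_right (le_abs_self _) h0
    _ ≤ |δ i| * (finrank k M : ℤ) := mul_le_mul_of_nonneg_left h1 (abs_nonneg _)

theorem tropF_bdd [FiniteDimensional k M] (δ : Fin n → ℤ) :
    BddAbove (Set.range fun L : Submodule Aᵐᵒᵖ M => pz δ (dimVec k A e L)) := by
  refine ⟨∑ i, |δ i| * (finrank k M : ℤ), ?_⟩
  rintro x ⟨L, rfl⟩
  exact pz_le_bound k A e M δ L

theorem le_tropF [FiniteDimensional k M] (δ : Fin n → ℤ) (L : Submodule Aᵐᵒᵖ M) :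
    pz δ (dimVec k A e L) ≤ tropF k A e M δ :=
  le_csSup (tropF_bdd k A e M δ) ⟨L, rfl⟩

theorem tropF_exists [FiniteDimensional k M] (δ : Fin n → ℤ) :
    ∃ L : Submodule Aᵐᵒᵖ M, pz δ (dimVec k A e L) = tropF k A e M δ := by
  have h := Int.csSup_mem (s := Set.range fun L : Submodule Aᵐᵒᵖ M => pz δ (dimVec k A e L))
    ⟨pz δ (dimVec k A e (⊥ : Submodule Aᵐᵒᵖ M)), ⟨⊥, rfl⟩⟩ (tropF_bdd k A e M δ)
  obtain ⟨L, hL⟩ := h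
  exact ⟨L, hL⟩

end Aux

end TropGP

open TropGP Module MulOpposite

/-- If `M = M₁ ⊕ M₂` and `L ⊆ M` satisfies `δ(dim L) = f_M(δ)`, then
`δ(dim (L∩M₁)) = f_{M₁}(δ)` and `δ(dim (L∩M₂)) = f_{M₂}(δ)`. -/
theorem statement11 (k : Type) [Field k] [IsAlgClosed k] [CharZero k]
    (A : Type) [Ring A] [Algebra k A] [FiniteDimensional k A]
    {n : ℕ} (e : Fin n → A) (hA : IsBasicSetup A e)
    (M₁ M₂ : Type) [AddCommGroup M₁] [Module k M₁] [Module Aᵐᵒᵖ M₁]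
    [IsScalarTower k Aᵐᵒᵖ M₁] [FiniteDimensional k M₁]
    [AddCommGroup M₂] [Module k M₂] [Module Aᵐᵒᵖ M₂]
    [IsScalarTower k Aᵐᵒᵖ M₂] [FiniteDimensional k M₂]
    (δ : Fin n → ℤ) (L : Submodule Aᵐᵒᵖ (M₁ × M₂))
    (hL : pz δ (dimVec k A e L) = tropF k A e (M₁ × M₂) δ) :
    pz δ (dimVec k A e
        (L ⊓ LinearMap.range (LinearMap.inl Aᵐᵒᵖ M₁ M₂) : Submodule Aᵐᵒᵖ (M₁ × M₂))) =
      tropF k A e M₁ δ ∧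
    pz δ (dimVec k A e
        (L ⊓ LinearMap.range (LinearMap.inr Aᵐᵒᵖ M₁ M₂) : Submodule Aᵐᵒᵖ (M₁ × M₂))) =
      tropF k A e M₂ δ := by
  obtain ⟨hidem, -, -, -, -⟩ := hA
  haveI hfdL : FiniteDimensional k L := fdSub k A (M₁ × M₂) L
  set P₁ : Submodule Aᵐᵒᵖ (M₁ × M₂) := LinearMap.range (LinearMap.inl Aᵐᵒᵖ M₁ M₂) with hP₁
  set P₂ : Submodule Aᵐᵒᵖ (M₁ × M₂) := LinearMap.range (LinearMap.inr Aᵐᵒᵖ M₁ M₂) with hP₂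
  set f₂ : L →ₗ[Aᵐᵒᵖ] M₂ := (LinearMap.snd Aᵐᵒᵖ M₁ M₂) ∘ₗ L.subtype with hf₂
  set f₁ : L →ₗ[Aᵐᵒᵖ] M₁ := (LinearMap.fst Aᵐᵒᵖ M₁ M₂) ∘ₗ L.subtype with hf₁
  have hker₂ : LinearMap.ker f₂ = Submodule.comap L.subtype P₁ := by
    rw [hf₂, LinearMap.ker_comp, LinearMap.ker_snd]
  have hker₁ : LinearMap.ker f₁ = Submodule.comap L.subtype P₂ := by
    rw [hf₁, LinearMap.ker_comp, LinearMap.ker_fst]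
  have hiso₂ : pz δ (dimVec k A e (LinearMap.ker f₂)) = pz δ (dimVec k A e ↥(L ⊓ P₁)) := by
    rw [hker₂]
    exact pz_eq_of_iso k A e _ _ δ
      ((Submodule.equivMapOfInjective L.subtype (Submodule.injective_subtype L) _).trans
        (LinearEquiv.ofEq _ _ (Submodule.map_comap_subtype L P₁)))
  have hiso₁ : pz δ (dimVec k A e (LinearMap.ker f₁)) = pz δ (dimVec k A e ↥(L ⊓ P₂)) := by
    rw [hker₁]
    exact pz_eq_of_iso k A e _ _ δ
      ((Submodule.equivMapOfInjective L.subtype (Submodule.injective_subtype L) _).trans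
        (LinearEquiv.ofEq _ _ (Submodule.map_comap_subtype L P₂)))
  have hcom₁ : pz δ (dimVec k A e (Submodule.comap (LinearMap.inl Aᵐᵒᵖ M₁ M₂) L)) =
      pz δ (dimVec k A e ↥(L ⊓ P₁)) := by
    refine pz_eq_of_iso k A e _ _ δ ?_
    refine (Submodule.equivMapOfInjective (LinearMap.inl Aᵐᵒᵖ M₁ M₂)
      (LinearMap.inl_injective) _).trans (LinearEquiv.ofEq _ _ ?_)
    rw [Submodule.map_comap_eq, hP₁, inf_comm]
  have hcom₂ : pz δ (dimVec k A e (Submodule.comap (LinearMap.inr Aᵐᵒᵖ M₁ M₂) L)) =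
      pz δ (dimVec k A e ↥(L ⊓ P₂)) := by
    refine pz_eq_of_iso k A e _ _ δ ?_
    refine (Submodule.equivMapOfInjective (LinearMap.inr Aᵐᵒᵖ M₁ M₂)
      (LinearMap.inr_injective) _).trans (LinearEquiv.ofEq _ _ ?_)
    rw [Submodule.map_comap_eq, hP₂, inf_comm]
  have hsplit₂ : pz δ (dimVec k A e L) =
      pz δ (dimVec k A e (LinearMap.ker f₂)) + pz δ (dimVec k A e (LinearMap.range f₂)) := by
    unfold pz
    rw [← Finset.sum_add_distrib]
    refine Finset.sum_congr rfl fun i _ => ?_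
    rw [dim_add k A e L M₂ f₂ i (hidem i), mul_add]
  have hsplit₁ : pz δ (dimVec k A e L) =
      pz δ (dimVec k A e (LinearMap.ker f₁)) + pz δ (dimVec k A e (LinearMap.range f₁)) := by
    unfold pz
    rw [← Finset.sum_add_distrib]
    refine Finset.sum_congr rfl fun i _ => ?_
    rw [dim_add k A e L M₁ f₁ i (hidem i), mul_add]
  have hb₂ : pz δ (dimVec k A e (LinearMap.range f₂)) ≤ tropF k A e M₂ δ :=
    le_tropF k A e M₂ δ _
  have hb₁ : pz δ (dimVec k A e (LinearMap.range f₁)) ≤ tropF k A e M₁ δ :=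
    le_tropF k A e M₁ δ _
  have ha₁ : pz δ (dimVec k A e ↥(L ⊓ P₁)) ≤ tropF k A e M₁ δ := by
    rw [← hcom₁]; exact le_tropF k A e M₁ δ _
  have ha₂ : pz δ (dimVec k A e ↥(L ⊓ P₂)) ≤ tropF k A e M₂ δ := by
    rw [← hcom₂]; exact le_tropF k A e M₂ δ _
  obtain ⟨L₁, hL₁⟩ := tropF_exists k A e M₁ δ
  obtain ⟨L₂, hL₂⟩ := tropF_exists k A e M₂ δ
  haveI := fdSub k A M₁ L₁
  haveI := fdSub k A M₂ L₂
  have hprod : pz δ (dimVec k A e (L₁.prod L₂)) =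
      pz δ (dimVec k A e L₁) + pz δ (dimVec k A e L₂) := by
    have h1 : pz δ (dimVec k A e (L₁.prod L₂)) = pz δ (dimVec k A e (↥L₁ × ↥L₂)) :=
      pz_eq_of_iso k A e _ _ δ (prodSubEquiv L₁ L₂)
    rw [h1]
    unfold pz
    rw [← Finset.sum_add_distrib]
    refine Finset.sum_congr rfl fun i _ => ?_
    rw [dim_prod k A e ↥L₁ ↥L₂ i, mul_add]
  have hsup : tropF k A e M₁ δ + tropF k A e M₂ δ ≤ tropF k A e (M₁ × M₂) δ := by
    rw [← hL₁, ← hL₂, ← hprod]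
    exact le_tropF k A e (M₁ × M₂) δ _
  rw [hiso₂] at hsplit₂
  rw [hiso₁] at hsplit₁
  constructor
  · linarith [hsplit₂, hL, hsup, ha₁, hb₂]
  · linarith [hsplit₁, hL, hsup, ha₂, hb₁]
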